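/- (Theorem 1, closed-form Modified Cramér–von Mises Distance.) Let N ≥ 1, let y_1, …, y_M ∈ ℝ^N with weights w_1^y, …, w_M^y > 0 and let x_1, …, x_L ∈ ℝ^N with weights w_1^x, …, w_L^x > 0, and fix b_max > 0. Define the modified Cramér–von Mises distance D = ∫_0^{b_max} b^{-(N-1)} ∫_{ℝ^N} (F̃(m,b) - F(m,b))² dm db, where F̃(m,b) = Σ_{i=1}^M w_i^y · Π_{k=1}^N exp(-(y_i^{(k)} - m^{(k)})²/(2b²)) and F(m,b) = Σ_{i=1}^L w_i^x · Π_{k=1}^N exp(-(x_i^{(k)} - m^{(k)})²/(2b²)). Then D = Σ_{i=1}^M Σ_{j=1}^M w_i^y w_j^y γ(‖y_i - y_j‖²) - 2 Σ_{i=1}^L Σ_{j=1}^M w_i^x w_j^y γ(‖x_i - y_j‖²) + Σ_{i=1}^L Σ_{j=1}^L w_i^x w_j^x γ(‖x_i - x_j‖²), where for z > 0, γ(z) = (π^{N/2}/8) · (4 b_max² · exp(-z/(4 b_max²)) + z · Ei(-z/(4 b_max²))), and γ(0) = (π^{N/2}/2) · b_max² (its continuous extension). -/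

import Mathlib

open MeasureTheory Real

/-- `negEi z` is the exponential integral `Ei(-z)`, defined for `z > 0` by
`Ei(-z) = -∫_z^∞ (e^{-t}/t) dt`. -/
noncomputable def negEi (z : ℝ) : ℝ := -∫ t in Set.Ioi z, Real.exp (-t) / t

open Set Filter

lemma integrableOn_expdiv {z : ℝ} (hz : 0 < z) :
    IntegrableOn (fun t => Real.exp (-t) / t) (Ioi z) := by
  have h := exp_neg_integrableOn_Ioi z (by norm_num : (0:ℝ) < 1)
  refine Integrable.mono (h.const_mul (1/z)) ?_ ?_
  · exact (Real.measurable_exp.comp measurable_neg).div measurable_id |>.aestronglyMeasurable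
  · filter_upwards [ae_restrict_mem measurableSet_Ioi] with t ht
    have htpos : 0 < t := hz.trans ht
    rw [Real.norm_eq_abs, Real.norm_eq_abs, abs_of_pos (div_pos (exp_pos _) htpos),
      abs_of_pos (by positivity : (0:ℝ) < 1/z * Real.exp (-1 * t))]
    calc Real.exp (-t) / t ≤ Real.exp (-t) / z :=
          div_le_div_of_nonneg_left (exp_pos _).le hz ht.le
      _ = 1/z * Real.exp (-1 * t) := by ring_nf
      _ ≤ _ := le_refl _

lemma negEi_bound {s : ℝ} (hs : 1 ≤ s) : |negEi s| ≤ Real.exp (-s) := by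
  have hspos : (0:ℝ) < s := lt_of_lt_of_le one_pos hs
  rw [negEi, abs_neg]
  have h0 : IntegrableOn (fun t => Real.exp (-t)) (Ioi s) := by
    simpa using exp_neg_integrableOn_Ioi s (by norm_num : (0:ℝ) < 1)
  have h1 : (∫ t in Ioi s, Real.exp (-t) / t) ≤ ∫ t in Ioi s, Real.exp (-t) := by
    refine setIntegral_mono_on (integrableOn_expdiv hspos) h0 measurableSet_Ioi ?_
    intro t ht
    have htpos : 0 < t := hspos.trans ht
    calc Real.exp (-t) / t ≤ Real.exp (-t) / 1 :=
          div_le_div_of_nonneg_left (exp_pos _).le one_pos (hs.trans ht.le)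
      _ = Real.exp (-t) := by ring
  have h2 : 0 ≤ ∫ t in Ioi s, Real.exp (-t) / t :=
    setIntegral_nonneg measurableSet_Ioi fun t ht => div_nonneg (exp_pos _).le (le_of_lt (hspos.trans ht))
  rw [abs_of_nonneg h2]
  exact h1.trans_eq (integral_exp_neg_Ioi s)

lemma negEi_tendsto : Tendsto negEi atTop (nhds 0) := by
  have h := Real.tendsto_exp_neg_atTop_nhds_zero
  rw [tendsto_zero_iff_abs_tendsto_zero]
  refine squeeze_zero_norm' ?_ h
  filter_upwards [eventually_ge_atTop (1:ℝ)] with s hs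
  simpa using negEi_bound hs

lemma negEi_eq {s0 s : ℝ} (h0 : 0 < s0) (hs : s0 ≤ s) :
    negEi s = (∫ t in s0..s, Real.exp (-t) / t) - ∫ t in Ioi s0, Real.exp (-t) / t := by
  have hsp : 0 < s := h0.trans_le hs
  have hsplit : (∫ t in Ioi s0, Real.exp (-t) / t)
      = (∫ t in Ioc s0 s, Real.exp (-t) / t) + ∫ t in Ioi s, Real.exp (-t) / t := by
    rw [← setIntegral_union (Ioc_disjoint_Ioi le_rfl) measurableSet_Ioi
      ((integrableOn_expdiv h0).mono_set Ioc_subset_Ioi_self) (integrableOn_expdiv hsp),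
      Ioc_union_Ioi_eq_Ioi hs]
  rw [negEi, intervalIntegral.integral_of_le hs]
  linarith [hsplit]

lemma hasDerivAt_negEi {s : ℝ} (hs : 0 < s) :
    HasDerivAt negEi (Real.exp (-s) / s) s := by
  set s0 := s / 2 with hs0
  have h0 : 0 < s0 := by positivity
  have hmem : Ioi s0 ∈ nhds s := Ioi_mem_nhds (by linarith)
  have hcont : ContinuousAt (fun t => Real.exp (-t) / t) s :=
    ((Real.continuous_exp.comp continuous_neg).continuousAt).div continuousAt_id hs.ne'
  have hmeas : StronglyMeasurableAtFilter (fun t => Real.exp (-t) / t) (nhds s) :=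
    ((Real.measurable_exp.comp measurable_neg).div measurable_id).stronglyMeasurable.stronglyMeasurableAtFilter
  have hint : IntervalIntegrable (fun t => Real.exp (-t) / t) volume s0 s := by
    rw [intervalIntegrable_iff_integrableOn_Ioc_of_le (by linarith)]
    exact (integrableOn_expdiv h0).mono_set Ioc_subset_Ioi_self
  have hd := intervalIntegral.integral_hasDerivAt_right hint hmeas hcont
  have hd2 : HasDerivAt (fun u => (∫ t in s0..u, Real.exp (-t) / t)
      - ∫ t in Ioi s0, Real.exp (-t) / t) (Real.exp (-s) / s) s := hd.sub_const _
  refine hd2.congr_of_eventuallyEq ?_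
  filter_upwards [hmem] with u hu
  exact negEi_eq h0 (le_of_lt hu)

lemma integrableOn_bexp {z bmax : ℝ} (hz : 0 ≤ z) (hb : 0 < bmax) :
    IntegrableOn (fun b => b * Real.exp (-z/(4*b^2))) (Ioc 0 bmax) := by
  have hmeas : Measurable fun b : ℝ => b * Real.exp (-z/(4*b^2)) := by fun_prop
  refine Measure.integrableOn_of_bounded (measure_Ioc_lt_top).ne
    hmeas.aestronglyMeasurable ?_ (M := bmax)
  filter_upwards [ae_restrict_mem measurableSet_Ioc] with b hbm
  obtain ⟨hb0, hb1⟩ := hbm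
  rw [Real.norm_eq_abs, abs_of_nonneg (by positivity)]
  have h1 : Real.exp (-z/(4*b^2)) ≤ 1 := by
    apply Real.exp_le_one_iff.mpr
    rw [neg_div]
    have : 0 ≤ z/(4*b^2) := by positivity
    linarith
  calc b * Real.exp (-z/(4*b^2)) ≤ b * 1 := by nlinarith [hb0]
    _ ≤ bmax := by linarith

lemma bint_zero {bmax : ℝ} (hb : 0 < bmax) :
    ∫ b in Ioc (0:ℝ) bmax, b * Real.exp (-0/(4*b^2)) = bmax^2/2 := by
  simp only [neg_zero, zero_div, Real.exp_zero, mul_one]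
  rw [← intervalIntegral.integral_of_le hb.le, integral_id]
  ring

lemma tendsto_inner_atTop {z : ℝ} (hz : 0 < z) :
    Tendsto (fun b : ℝ => z/(4*b^2)) (nhdsWithin 0 (Ioi 0)) atTop := by
  have h1 : Tendsto (fun b : ℝ => 4*b^2) (nhdsWithin 0 (Ioi 0)) (nhdsWithin 0 (Ioi 0)) := by
    rw [tendsto_nhdsWithin_iff]
    constructor
    · have h : Continuous (fun b : ℝ => 4*b^2) := by continuity
      have h0 := h.tendsto 0
      norm_num at h0
      exact h0.mono_left nhdsWithin_le_nhds
    · filter_upwards [self_mem_nhdsWithin] with b hbm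
      have : (0:ℝ) < b := hbm
      exact mem_Ioi.mpr (by positivity)
  have h2 : Tendsto (fun b : ℝ => (4*b^2)⁻¹) (nhdsWithin 0 (Ioi 0)) atTop :=
    tendsto_inv_nhdsGT_zero.comp h1
  have h3 := h2.const_mul_atTop hz
  refine h3.congr fun b => by rw [div_eq_mul_inv]

lemma hasDerivAt_Gform {z b : ℝ} (hz : 0 < z) (hb : 0 < b) :
    HasDerivAt (fun u : ℝ => (1/2)*(u^2*Real.exp (-z/(4*u^2)) + z/4 * negEi (z/(4*u^2))))
      (b * Real.exp (-z/(4*b^2))) b := by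
  have hb2 : (4*b^2 : ℝ) ≠ 0 := by positivity
  have hspos : 0 < z/(4*b^2) := by positivity
  have hinner : HasDerivAt (fun u : ℝ => z/(4*u^2))
      ((0 * (4*b^2) - z * (4*(2*b))) / (4*b^2)^2) b := by
    have h4 : HasDerivAt (fun u : ℝ => 4*u^2) (4*(2*b)) b := by
      simpa using (hasDerivAt_pow 2 b).const_mul (4:ℝ)
    exact (hasDerivAt_const b z).div h4 hb2
  have hexp : HasDerivAt (fun u : ℝ => Real.exp (-z/(4*u^2)))
      (Real.exp (-z/(4*b^2)) * (-((0 * (4*b^2) - z * (4*(2*b))) / (4*b^2)^2))) b := by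
    have := (hinner.neg).exp
    simpa [neg_div] using this
  have hsq : HasDerivAt (fun u : ℝ => u^2) (2*b) b := by simpa using hasDerivAt_pow 2 b
  have hEi : HasDerivAt (fun u : ℝ => negEi (z/(4*u^2)))
      (Real.exp (-(z/(4*b^2))) / (z/(4*b^2)) * ((0 * (4*b^2) - z * (4*(2*b))) / (4*b^2)^2)) b :=
    by have := (hasDerivAt_negEi hspos).comp b hinner; exact this
  have h := ((hsq.mul hexp).add (hEi.const_mul (z/4))).const_mul (1/2 : ℝ)
  refine h.congr_deriv ?_
  rw [neg_div]
  field_simp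
  ring

noncomputable def Gaux (z : ℝ) : ℝ → ℝ := fun b =>
  if b ≤ 0 then 0 else (1/2)*(b^2*Real.exp (-z/(4*b^2)) + z/4 * negEi (z/(4*b^2)))

lemma Gaux_eventually_eq {z b : ℝ} (hb : 0 < b) :
    Gaux z =ᶠ[nhds b] fun u => (1/2)*(u^2*Real.exp (-z/(4*u^2)) + z/4 * negEi (z/(4*u^2))) := by
  filter_upwards [Ioi_mem_nhds hb] with u hu
  exact if_neg (not_le.mpr hu)

lemma hasDerivAt_Gaux {z b : ℝ} (hz : 0 < z) (hb : 0 < b) :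
    HasDerivAt (Gaux z) (b * Real.exp (-z/(4*b^2))) b :=
  (hasDerivAt_Gform hz hb).congr_of_eventuallyEq (Gaux_eventually_eq hb)

lemma Gaux_tendsto_zero {z : ℝ} (hz : 0 < z) :
    Tendsto (Gaux z) (nhdsWithin 0 (Ioi 0)) (nhds 0) := by
  have hT := tendsto_inner_atTop hz
  have h1 : Tendsto (fun b : ℝ => Real.exp (-z/(4*b^2))) (nhdsWithin 0 (Ioi 0)) (nhds 0) := by
    have := Real.tendsto_exp_neg_atTop_nhds_zero.comp hT
    refine this.congr fun b => by rw [Function.comp_apply, neg_div]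
  have h2 : Tendsto (fun b : ℝ => b^2) (nhdsWithin 0 (Ioi 0)) (nhds 0) := by
    have h := (continuous_pow 2).tendsto (0:ℝ)
    norm_num at h
    exact h.mono_left nhdsWithin_le_nhds
  have h3 : Tendsto (fun b : ℝ => negEi (z/(4*b^2))) (nhdsWithin 0 (Ioi 0)) (nhds 0) :=
    negEi_tendsto.comp hT
  have hform := (((h2.mul h1).add (h3.const_mul (z/4))).const_mul (1/2 : ℝ))
  norm_num at hform
  refine hform.congr' ?_
  filter_upwards [self_mem_nhdsWithin] with b hbm
  exact (if_neg (not_le.mpr hbm)).symm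

lemma bint_pos {z bmax : ℝ} (hz : 0 < z) (hb : 0 < bmax) :
    ∫ b in Ioc (0:ℝ) bmax, b * Real.exp (-z/(4*b^2))
      = (1/8)*(4*bmax^2*Real.exp (-z/(4*bmax^2)) + z * negEi (z/(4*bmax^2))) := by
  have hcont : ContinuousOn (Gaux z) (Icc 0 bmax) := by
    intro b hbm
    rcases eq_or_lt_of_le hbm.1 with h | h
    · -- b = 0
      subst h
      rw [ContinuousWithinAt]
      have hmono : nhdsWithin (0:ℝ) (Icc 0 bmax) ≤ nhdsWithin 0 (insert 0 (Ioi 0)) := by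
        apply nhdsWithin_mono
        rw [Set.Ioi_insert]
        exact Icc_subset_Ici_self
      rw [show Gaux z 0 = 0 from if_pos le_rfl]
      refine Tendsto.mono_left ?_ hmono
      rw [nhdsWithin_insert]
      refine Tendsto.sup ?_ (Gaux_tendsto_zero hz)
      rw [Filter.tendsto_pure_left]
      intro s hs
      rw [show Gaux z 0 = 0 from if_pos le_rfl]
      exact mem_of_mem_nhds hs
    · exact ((hasDerivAt_Gaux hz h).continuousAt).continuousWithinAt
  have hderiv : ∀ b ∈ Ioo (0:ℝ) bmax,
      HasDerivWithinAt (Gaux z) (b * Real.exp (-z/(4*b^2))) (Ioi b) b :=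
    fun b hbm => (hasDerivAt_Gaux hz hbm.1).hasDerivWithinAt
  have hint : IntervalIntegrable (fun b => b * Real.exp (-z/(4*b^2))) volume 0 bmax := by
    rw [intervalIntegrable_iff_integrableOn_Ioc_of_le hb.le]
    exact integrableOn_bexp hz.le hb
  have h := intervalIntegral.integral_eq_sub_of_hasDeriv_right_of_le hb.le hcont hderiv hint
  rw [intervalIntegral.integral_of_le hb.le] at h
  rw [h, show Gaux z 0 = 0 from if_pos le_rfl, show Gaux z bmax
    = (1/2)*(bmax^2*Real.exp (-z/(4*bmax^2)) + z/4 * negEi (z/(4*bmax^2))) from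
      if_neg (not_le.mpr hb)]
  ring

lemma gauss_combine {b : ℝ} (hb : 0 < b) (a c m : ℝ) :
    Real.exp (-(a-m)^2/(2*b^2)) * Real.exp (-(c-m)^2/(2*b^2))
      = Real.exp (-((a-c)^2)/(4*b^2)) * Real.exp (-(1/b^2) * (m - (a+c)/2)^2) := by
  rw [← Real.exp_add, ← Real.exp_add]
  congr 1
  field_simp
  ring

lemma gauss1d_integrable {b : ℝ} (hb : 0 < b) (a c : ℝ) :
    Integrable (fun m => Real.exp (-(a-m)^2/(2*b^2)) * Real.exp (-(c-m)^2/(2*b^2))) := by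
  have hk : 0 < 1/b^2 := by positivity
  have h1 : Integrable (fun m : ℝ => Real.exp (-(1/b^2) * (m - (a+c)/2)^2)) :=
    Integrable.comp_sub_right (integrable_exp_neg_mul_sq hk) ((a+c)/2)
  have h2 := h1.const_mul (Real.exp (-((a-c)^2)/(4*b^2)))
  exact h2.congr (Filter.Eventually.of_forall fun m => (gauss_combine hb a c m).symm)

lemma gauss1d {b : ℝ} (hb : 0 < b) (a c : ℝ) :
    ∫ m : ℝ, Real.exp (-(a-m)^2/(2*b^2)) * Real.exp (-(c-m)^2/(2*b^2))
      = Real.sqrt Real.pi * b * Real.exp (-((a-c)^2)/(4*b^2)) := by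
  simp_rw [gauss_combine hb a c]
  rw [integral_const_mul, integral_sub_right_eq_self
    (fun m : ℝ => Real.exp (-(1/b^2) * m^2)) ((a+c)/2), integral_gaussian]
  rw [show Real.pi / (1/b^2) = Real.pi * b^2 by field_simp]
  rw [Real.sqrt_mul Real.pi_pos.le, Real.sqrt_sq hb.le]
  ring

lemma sqrtpi_pow (N : ℕ) : (Real.sqrt Real.pi)^N = Real.pi ^ ((N:ℝ)/2) := by
  rw [Real.sqrt_eq_rpow, ← Real.rpow_natCast (Real.pi ^ (1/2:ℝ)) N,
    ← Real.rpow_mul Real.pi_pos.le]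
  rw [one_div, inv_mul_eq_div]

lemma gaussNd {N : ℕ} {b : ℝ} (hb : 0 < b) (p q : Fin N → ℝ) :
    ∫ m : Fin N → ℝ, (∏ k, Real.exp (-(p k - m k)^2/(2*b^2)))
        * ∏ k, Real.exp (-(q k - m k)^2/(2*b^2))
      = b^N * Real.pi ^ ((N:ℝ)/2) * Real.exp (-(∑ k, (p k - q k)^2)/(4*b^2)) := by
  simp_rw [← Finset.prod_mul_distrib]
  rw [MeasureTheory.volume_pi, MeasureTheory.integral_fintype_prod_eq_prod (ι := Fin N)
    (f := fun k (mk:ℝ) => Real.exp (-(p k - mk)^2/(2*b^2)) * Real.exp (-(q k - mk)^2/(2*b^2)))]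
  have h1 : ∀ k : Fin N, (∫ mk : ℝ, Real.exp (-(p k - mk)^2/(2*b^2))
      * Real.exp (-(q k - mk)^2/(2*b^2)))
      = Real.sqrt Real.pi * b * Real.exp (-((p k - q k)^2)/(4*b^2)) := fun k => gauss1d hb _ _
  rw [Finset.prod_congr rfl fun k _ => h1 k, Finset.prod_mul_distrib, Finset.prod_const]
  rw [← Real.exp_sum]
  have h2 : ∑ k, -((p k - q k)^2)/(4*b^2) = -(∑ k, (p k - q k)^2)/(4*b^2) := by
    simp only [neg_div, Finset.sum_neg_distrib, Finset.sum_div]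
  rw [h2, Finset.card_univ, Fintype.card_fin, mul_pow, sqrtpi_pow]
  ring

lemma gaussNd_integrable {N : ℕ} {b : ℝ} (hb : 0 < b) (p q : Fin N → ℝ) :
    Integrable (fun m : Fin N → ℝ => (∏ k, Real.exp (-(p k - m k)^2/(2*b^2)))
        * ∏ k, Real.exp (-(q k - m k)^2/(2*b^2))) := by
  have h := MeasureTheory.Integrable.fintype_prod (E := ℝ) (𝕜 := ℝ)
    (f := fun (k : Fin N) (mk:ℝ) => Real.exp (-(p k - mk)^2/(2*b^2))
      * Real.exp (-(q k - mk)^2/(2*b^2))) (fun k => gauss1d_integrable hb _ _)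
  exact h.congr (Filter.Eventually.of_forall fun m => by simp [← Finset.prod_mul_distrib])

lemma gamma_eq {N : ℕ} {bmax : ℝ} (hb : 0 < bmax) (γ : ℝ → ℝ)
    (hγ : ∀ z, γ z = if z = 0 then Real.pi ^ ((N : ℝ) / 2) / 2 * bmax ^ 2
        else Real.pi ^ ((N : ℝ) / 2) / 8 *
          (4 * bmax ^ 2 * Real.exp (-z / (4 * bmax ^ 2))
            + z * negEi (z / (4 * bmax ^ 2))))
    {z : ℝ} (hz : 0 ≤ z) :
    Real.pi ^ ((N:ℝ)/2) * ∫ b in Ioc (0:ℝ) bmax, b * Real.exp (-z/(4*b^2)) = γ z := by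
  rcases eq_or_lt_of_le hz with h | h
  · subst h
    rw [bint_zero hb, hγ, if_pos rfl]
    ring
  · rw [bint_pos h hb, hγ, if_neg h.ne']
    ring


theorem modified_cramer_von_mises_closed_form
    (N M L : ℕ) (hN : 1 ≤ N)
    (y : Fin M → Fin N → ℝ) (wy : Fin M → ℝ) (hwy : ∀ i, 0 < wy i)
    (x : Fin L → Fin N → ℝ) (wx : Fin L → ℝ) (hwx : ∀ i, 0 < wx i)
    (bmax : ℝ) (hb : 0 < bmax)
    (γ : ℝ → ℝ)
    (hγ : ∀ z, γ z = if z = 0 then Real.pi ^ ((N : ℝ) / 2) / 2 * bmax ^ 2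
        else Real.pi ^ ((N : ℝ) / 2) / 8 *
          (4 * bmax ^ 2 * Real.exp (-z / (4 * bmax ^ 2))
            + z * negEi (z / (4 * bmax ^ 2)))) :
    (∫ b in Set.Ioc (0:ℝ) bmax, (1 / b ^ (N - 1)) *
        ∫ m : Fin N → ℝ,
          ((∑ i, wy i * ∏ k, Real.exp (-(y i k - m k) ^ 2 / (2 * b ^ 2)))
            - ∑ i, wx i * ∏ k, Real.exp (-(x i k - m k) ^ 2 / (2 * b ^ 2))) ^ 2)
      = ∑ i, ∑ j, wy i * wy j * γ (∑ k, (y i k - y j k) ^ 2)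
        - 2 * ∑ i, ∑ j, wx i * wy j * γ (∑ k, (x i k - y j k) ^ 2)
        + ∑ i, ∑ j, wx i * wx j * γ (∑ k, (x i k - x j k) ^ 2) := by
  classical
  let w : Fin M ⊕ Fin L → ℝ := Sum.elim wy (fun i => -wx i)
  let p : Fin M ⊕ Fin L → Fin N → ℝ := Sum.elim y x
  let z : (Fin M ⊕ Fin L) × (Fin M ⊕ Fin L) → ℝ := fun ij => ∑ k, (p ij.1 k - p ij.2 k)^2
  have hznn : ∀ ij, 0 ≤ z ij := fun ij => Finset.sum_nonneg fun k _ => sq_nonneg _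
  -- Step 1: rewrite the integrand for each b ∈ Ioc 0 bmax
  have hLHS : ∀ b ∈ Ioc (0:ℝ) bmax,
      (1 / b ^ (N - 1)) * (∫ m : Fin N → ℝ,
          ((∑ i, wy i * ∏ k, Real.exp (-(y i k - m k) ^ 2 / (2 * b ^ 2)))
            - ∑ i, wx i * ∏ k, Real.exp (-(x i k - m k) ^ 2 / (2 * b ^ 2))) ^ 2)
      = ∑ ij : (Fin M ⊕ Fin L) × (Fin M ⊕ Fin L),
          (w ij.1 * w ij.2 * Real.pi ^ ((N:ℝ)/2)) * (b * Real.exp (-(z ij)/(4*b^2))) := by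
    intro b hbm
    have hb0 : 0 < b := hbm.1
    have hinteg : ∀ m : Fin N → ℝ,
        ((∑ i, wy i * ∏ k, Real.exp (-(y i k - m k) ^ 2 / (2 * b ^ 2)))
            - ∑ i, wx i * ∏ k, Real.exp (-(x i k - m k) ^ 2 / (2 * b ^ 2))) ^ 2
        = ∑ ij : (Fin M ⊕ Fin L) × (Fin M ⊕ Fin L),
            (w ij.1 * w ij.2) * ((∏ k, Real.exp (-(p ij.1 k - m k)^2/(2*b^2)))
              * (∏ k, Real.exp (-(p ij.2 k - m k)^2/(2*b^2)))) := by
      intro m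
      have hd : ((∑ i, wy i * ∏ k, Real.exp (-(y i k - m k) ^ 2 / (2 * b ^ 2)))
            - ∑ i, wx i * ∏ k, Real.exp (-(x i k - m k) ^ 2 / (2 * b ^ 2)))
          = ∑ i : Fin M ⊕ Fin L, w i * ∏ k, Real.exp (-(p i k - m k)^2/(2*b^2)) := by
        rw [Fintype.sum_sum_type]
        simp only [w, p, Sum.elim_inl, Sum.elim_inr, neg_mul]
        rw [Finset.sum_neg_distrib, ← sub_eq_add_neg]
      rw [hd, sq, Finset.sum_mul_sum, ← Finset.univ_product_univ, Finset.sum_product]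
      exact Finset.sum_congr rfl fun i _ => Finset.sum_congr rfl fun j _ => by ring
    rw [MeasureTheory.integral_congr_ae (Filter.Eventually.of_forall hinteg)]
    rw [MeasureTheory.integral_finset_sum _
      (fun ij _ => (gaussNd_integrable hb0 (p ij.1) (p ij.2)).const_mul _)]
    rw [Finset.mul_sum]
    refine Finset.sum_congr rfl fun ij _ => ?_
    rw [MeasureTheory.integral_const_mul, gaussNd hb0]
    have hbN : b ^ N = b ^ (N-1) * b := by rw [← pow_succ, Nat.sub_add_cancel hN]
    have hbne : b ^ (N-1) ≠ 0 := by positivity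
    rw [hbN]
    field_simp
    ring
  rw [setIntegral_congr_fun measurableSet_Ioc hLHS]
  rw [MeasureTheory.integral_finset_sum _
    (fun ij _ => ((integrableOn_bexp (hznn ij) hb).const_mul _))]
  have hγz : ∀ ij : (Fin M ⊕ Fin L) × (Fin M ⊕ Fin L),
      ∫ b in Ioc (0:ℝ) bmax, (w ij.1 * w ij.2 * Real.pi ^ ((N:ℝ)/2))
          * (b * Real.exp (-(z ij)/(4*b^2)))
        = w ij.1 * w ij.2 * γ (z ij) := by
    intro ij
    rw [MeasureTheory.integral_const_mul, ← gamma_eq hb γ hγ (hznn ij)]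
    ring
  rw [Finset.sum_congr rfl fun ij _ => hγz ij]
  -- Step 2: split the sum over the sum type
  rw [← Finset.univ_product_univ, Finset.sum_product, Fintype.sum_sum_type]
  simp only [Fintype.sum_sum_type, w, p, z, Sum.elim_inl, Sum.elim_inr, neg_mul, mul_neg]
  rw [Finset.sum_add_distrib, Finset.sum_add_distrib]
  have hyx : ∑ i : Fin M, ∑ j : Fin L, -(wy i * wx j * γ (∑ k, (y i k - x j k)^2))
      = -∑ i : Fin L, ∑ j : Fin M, wx i * wy j * γ (∑ k, (x i k - y j k)^2) := by
    rw [Finset.sum_comm, ← Finset.sum_neg_distrib]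
    refine Finset.sum_congr rfl fun j _ => ?_
    rw [← Finset.sum_neg_distrib]
    refine Finset.sum_congr rfl fun i _ => ?_
    have h : ∑ k, (y i k - x j k)^2 = ∑ k, (x j k - y i k)^2 :=
      Finset.sum_congr rfl fun k _ => by ring
    rw [h]; ring
  have hxy : ∑ i : Fin L, ∑ j : Fin M, -(wx i * wy j * γ (∑ k, (x i k - y j k)^2))
      = -∑ i : Fin L, ∑ j : Fin M, wx i * wy j * γ (∑ k, (x i k - y j k)^2) := by
    rw [← Finset.sum_neg_distrib]
    exact Finset.sum_congr rfl fun i _ => Finset.sum_neg_distrib _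
  rw [hyx, hxy]
  simp only [neg_neg]
  linarith
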